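/- arXiv:1811.02463 — 2 statements merged into one kernel-verified Lean document; each statement's English description precedes it below -/
import Mathlib

section
/- Let f be a nonnegative function in BMO ∩ L¹(ℝ^d). Then there exist constants C, c > 0 depending only on d such that for every λ > a (where a is the dimensional John–Nirenberg constant), ∫_{ℝ^d} (f(x) − λ(‖f‖_{L¹} + ‖f‖_{BMO}))₊ dx ≤ C exp(−cλ) ‖f‖_{L¹}. -/
open MeasureTheory Real Set

lemma exp_int_aux {r : ℝ} (hr : 0 < r) :
    ∫ t in Set.Ioi (0:ℝ), Real.exp (-r * t) = r⁻¹ := by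
  have h := integral_comp_mul_left_Ioi (fun x => Real.exp (-x)) 0 hr
  simp only [mul_zero, integral_exp_neg_Ioi_zero, smul_eq_mul, mul_one] at h
  rw [← h]
  congr 1 with x
  ring_nf

/-- BMO decay lemma: let `f ≥ 0` be integrable on `ℝᵈ` with BMO (semi)norm `B`, satisfying
the John–Nirenberg inequality with dimensional constants `A, a, b` on every cube
(closed ball for the sup norm on `Fin d → ℝ`).  Then there are constants `C, c > 0`
depending only on the dimension (through `A, a, b`) such that for every `λ > a`,
`∫ (f − λ(‖f‖₁ + B))₊ ≤ C exp(−cλ) ‖f‖₁`. -/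
theorem stmt0 (d : ℕ) (A a b : ℝ) (hA : 0 < A) (ha : 0 < a) (hb : 0 < b) :
    ∃ C c : ℝ, 0 < C ∧ 0 < c ∧
      ∀ f : (Fin d → ℝ) → ℝ, Measurable f → (∀ x, 0 ≤ f x) → Integrable f →
      ∀ B : ℝ, 0 < B →
      -- John–Nirenberg inequality for `f` with BMO norm `B`:
      (∀ (z : Fin d → ℝ) (ρ : ℝ), 0 < ρ → ∀ s : ℝ, a * B < s →
        volume {x ∈ Metric.closedBall z ρ |
            s < |f x - ⨍ y in Metric.closedBall z ρ, f y|} ≤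
          ENNReal.ofReal ((A / B) * Real.exp (-(b * s) / B) *
            ∫ y in Metric.closedBall z ρ,
              |f y - ⨍ w in Metric.closedBall z ρ, f w|)) →
      ∀ lam : ℝ, a < lam →
        ∫ x, max (f x - lam * ((∫ y, f y) + B)) 0 ≤
          C * Real.exp (-(c * lam)) * ∫ y, f y := by
  refine ⟨2*A/b + Real.exp b, b, by positivity, hb, ?_⟩
  intro f hf hf0 hfi B hB hJN lam hlam
  have hlam0 : 0 < lam := ha.trans hlam
  set M := ∫ y, f y with hM
  have hM0 : 0 ≤ M := integral_nonneg hf0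
  have hc0 : 0 ≤ lam * (M + B) := by positivity
  have hg_meas : Measurable fun x => max (f x - lam * (M + B)) 0 :=
    (hf.sub measurable_const).max measurable_const
  have hg_le : ∀ x, max (f x - lam * (M + B)) 0 ≤ f x := fun x =>
    max_le (by linarith [hf0 x]) (hf0 x)
  have hg_nonneg : ∀ x, 0 ≤ max (f x - lam * (M + B)) 0 := fun x => le_max_right _ _
  have hg_int : Integrable fun x => max (f x - lam * (M + B)) 0 :=
    hfi.mono' hg_meas.aestronglyMeasurable
      (ae_of_all _ fun x => by
        rw [Real.norm_eq_abs, abs_of_nonneg (hg_nonneg x)]; exact hg_le x)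
  rcases lt_or_ge lam 1 with h1 | h1
  · -- trivial case lam < 1
    have h2 : ∫ x, max (f x - lam * (M + B)) 0 ≤ M := integral_mono hg_int hfi hg_le
    have h3 : (1:ℝ) ≤ Real.exp b * Real.exp (-(b*lam)) := by
      rw [← Real.exp_add]
      have h4 : (0:ℝ) ≤ b + -(b*lam) := by nlinarith
      calc (1:ℝ) = Real.exp 0 := by simp
        _ ≤ _ := Real.exp_le_exp.mpr h4
    calc ∫ x, max (f x - lam * (M + B)) 0 ≤ M := h2
      _ ≤ Real.exp b * Real.exp (-(b*lam)) * M := by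
          have := mul_le_mul_of_nonneg_right h3 hM0
          linarith
      _ ≤ (2*A/b + Real.exp b) * Real.exp (-(b*lam)) * M := by
          apply mul_le_mul_of_nonneg_right _ hM0
          apply mul_le_mul_of_nonneg_right _ (Real.exp_nonneg _)
          have : 0 ≤ 2*A/b := by positivity
          linarith
  · -- main case lam ≥ 1
    set S : (Fin d → ℤ) → Set (Fin d → ℝ) :=
      fun z => Set.univ.pi fun i => Set.Ico ((z i : ℝ) - 2⁻¹) ((z i : ℝ) + 2⁻¹) with hS
    have hSmeas : ∀ z, MeasurableSet (S z) := fun z =>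
      MeasurableSet.univ_pi fun i => measurableSet_Ico
    have hfloor : ∀ (x : Fin d → ℝ) (z : Fin d → ℤ), x ∈ S z →
        z = fun i => ⌊x i + 2⁻¹⌋ := by
      intro x z hx
      funext i
      have h := hx i (mem_univ i)
      simp only [mem_Ico] at h
      symm
      rw [Int.floor_eq_iff]
      push_cast
      constructor <;> linarith [h.1, h.2]
    have hdisj : Pairwise (Function.onFun Disjoint S) := by
      intro z z' hzz'
      rw [Function.onFun, Set.disjoint_left]
      intro x hx hx'
      exact hzz' ((hfloor x z hx).trans (hfloor x z' hx').symm)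
    have hcover : (⋃ z, S z) = univ := by
      ext x
      simp only [mem_iUnion, mem_univ, iff_true]
      refine ⟨fun i => ⌊x i + 2⁻¹⌋, fun i _ => ?_⟩
      simp only [mem_Ico]
      constructor
      · have := Int.floor_le (x i + 2⁻¹); linarith
      · have := Int.lt_floor_add_one (x i + 2⁻¹); push_cast; linarith
    have hSK : ∀ z, S z ⊆ Metric.closedBall (fun i => (z i : ℝ)) 2⁻¹ := by
      intro z x hx
      rw [Metric.mem_closedBall, dist_pi_le_iff (by norm_num : (0:ℝ) ≤ 2⁻¹)]
      intro i
      have h := hx i (mem_univ i)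
      simp only [mem_Ico] at h
      rw [Real.dist_eq, abs_le]
      constructor <;> linarith [h.1, h.2]
    have hKvol : ∀ z : Fin d → ℤ,
        volume (Metric.closedBall (fun i => (z i : ℝ)) 2⁻¹) = 1 := by
      intro z
      rw [Real.volume_pi_closedBall _ (by norm_num : (0:ℝ) ≤ 2⁻¹)]
      norm_num
    have hSvol : ∀ z, volume (S z) = 1 := by
      intro z
      rw [hS, volume_pi_pi]
      have : ∀ i : Fin d, volume (Set.Ico ((z i : ℝ) - 2⁻¹) ((z i : ℝ) + 2⁻¹)) = 1 := by
        intro i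
        rw [Real.volume_Ico]
        norm_num
      simp [this]
    have hnull : ∀ z, volume (Metric.closedBall (fun i => (z i : ℝ)) 2⁻¹ \ S z) = 0 := by
      intro z
      rw [measure_diff (hSK z) (hSmeas z).nullMeasurableSet (by rw [hSvol]; exact ENNReal.one_ne_top),
        hKvol, hSvol, tsub_self]
    have hae : ∀ z, S z =ᵐ[volume] Metric.closedBall (fun i => (z i : ℝ)) 2⁻¹ := by
      intro z
      apply MeasureTheory.ae_eq_set.mpr
      constructor
      · rw [Set.diff_eq_empty.mpr (hSK z)]; exact measure_empty
      · exact hnull z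
    have key : ∀ z : Fin d → ℤ,
        ∫⁻ x in S z, ENNReal.ofReal (max (f x - lam * (M + B)) 0) ≤
          ENNReal.ofReal (2*A/b * Real.exp (-(b*lam))) *
            ∫⁻ x in Metric.closedBall (fun i => (z i : ℝ)) 2⁻¹, ENNReal.ofReal (f x) := by
      intro z
      set K := Metric.closedBall (fun i => (z i : ℝ)) 2⁻¹ with hK
      set I := ∫ y in K, f y with hI
      have hKmeas : MeasurableSet K := Metric.isClosed_closedBall.measurableSet
      have hI0 : 0 ≤ I := setIntegral_nonneg hKmeas fun x _ => hf0 x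
      have hIM : I ≤ M := setIntegral_le_integral hfi (ae_of_all _ hf0)
      have havg : (⨍ y in K, f y) = I := by
        rw [setAverage_eq, measureReal_def, hKvol z]
        simp [hI]
      have hfiK : IntegrableOn f K := hfi.integrableOn
      have hconstK : IntegrableOn (fun _ => I) K := by
        apply (integrableOn_const_iff).mpr
        right
        rw [hKvol z]
        exact ENNReal.one_lt_top
      have hJ : (∫ y in K, |f y - ⨍ w in K, f w|) ≤ 2 * I := by
        rw [havg]
        have h1 : IntegrableOn (fun y => |f y - I|) K := (hfiK.sub hconstK).abs
        have h2 : IntegrableOn (fun y => f y + I) K := hfiK.add hconstK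
        have h3 : (∫ y in K, |f y - I|) ≤ ∫ y in K, (f y + I) := by
          apply integral_mono h1 h2
          intro y
          have := hf0 y
          rw [abs_le]
          constructor <;> simp <;> nlinarith
        have h4 : (∫ y in K, (f y + I)) = I + I := by
          rw [integral_add hfiK hconstK, setIntegral_const, measureReal_def, hKvol z]
          simp [hI]
        linarith
      have hlc := lintegral_eq_lintegral_meas_lt (volume.restrict (S z))
        (ae_of_all _ hg_nonneg) hg_meas.aemeasurable
      rw [hlc]
      set c0 := A/B * (2*I) * Real.exp (-(b*lam)) with hc0def
      have hc0nn : 0 ≤ c0 := by positivity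
      have hbound : ∀ t ∈ Ioi (0:ℝ),
          (volume.restrict (S z)) {x | t < max (f x - lam * (M + B)) 0} ≤
            ENNReal.ofReal (c0 * Real.exp (-(b/B) * t)) := by
        intro t ht
        rw [Measure.restrict_apply (measurableSet_lt measurable_const hg_meas)]
        have ht0 : (0:ℝ) < t := ht
        have hsub : {x | t < max (f x - lam * (M + B)) 0} ∩ S z ⊆
            {x ∈ K | lam * B + t < |f x - ⨍ y in K, f y|} := by
          rintro x ⟨hx1, hx2⟩
          simp only [mem_setOf_eq] at hx1 ⊢
          refine ⟨hSK z hx2, ?_⟩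
          rw [havg]
          have hfx : t < f x - lam * (M + B) := by
            rcases lt_max_iff.mp hx1 with h | h
            · exact h
            · linarith
          have hlm : 0 ≤ (lam - 1) * M := mul_nonneg (by linarith) hM0
          have : lam * B + t < f x - I := by nlinarith
          calc lam * B + t < f x - I := this
            _ ≤ |f x - I| := le_abs_self _
        have hJN' := hJN (fun i => (z i : ℝ)) 2⁻¹ (by norm_num) (lam*B + t)
          (by nlinarith [mul_pos (sub_pos.mpr hlam) hB])
        calc volume ({x | t < max (f x - lam * (M + B)) 0} ∩ S z)
            ≤ volume {x ∈ K | lam * B + t < |f x - ⨍ y in K, f y|} := measure_mono hsub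
          _ ≤ ENNReal.ofReal ((A / B) * Real.exp (-(b * (lam*B + t)) / B) *
              ∫ y in K, |f y - ⨍ w in K, f w|) := hJN'
          _ ≤ ENNReal.ofReal (c0 * Real.exp (-(b/B) * t)) := by
              apply ENNReal.ofReal_le_ofReal
              have hexp : Real.exp (-(b * (lam*B + t)) / B) =
                  Real.exp (-(b*lam)) * Real.exp (-(b/B) * t) := by
                rw [← Real.exp_add]
                congr 1
                field_simp
                ring
              rw [hexp, hc0def]
              have hJnn : 0 ≤ ∫ y in K, |f y - ⨍ w in K, f w| :=
                setIntegral_nonneg hKmeas fun y _ => abs_nonneg _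
              have he : 0 ≤ Real.exp (-(b*lam)) * Real.exp (-(b/B) * t) := by positivity
              have h7 : A/B * (∫ y in K, |f y - ⨍ w in K, f w|) ≤ A/B * (2*I) :=
                mul_le_mul_of_nonneg_left hJ (by positivity)
              calc A / B * (Real.exp (-(b*lam)) * Real.exp (-(b/B) * t)) *
                    (∫ y in K, |f y - ⨍ w in K, f w|)
                  = A/B * (∫ y in K, |f y - ⨍ w in K, f w|) *
                      (Real.exp (-(b*lam)) * Real.exp (-(b/B) * t)) := by ring
                _ ≤ A/B * (2*I) * (Real.exp (-(b*lam)) * Real.exp (-(b/B) * t)) :=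
                    mul_le_mul_of_nonneg_right h7 he
                _ = A/B * (2*I) * Real.exp (-(b*lam)) * Real.exp (-(b/B) * t) := by ring
      have hrpos : 0 < b / B := by positivity
      have hint : IntegrableOn (fun t => c0 * Real.exp (-(b/B) * t)) (Ioi (0:ℝ)) :=
        (exp_neg_integrableOn_Ioi 0 hrpos).const_mul c0
      calc ∫⁻ t in Ioi 0, (volume.restrict (S z)) {x | t < max (f x - lam * (M + B)) 0}
          ≤ ∫⁻ t in Ioi 0, ENNReal.ofReal (c0 * Real.exp (-(b/B) * t)) := by
            apply lintegral_mono_ae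
            filter_upwards [ae_restrict_mem measurableSet_Ioi] with t ht
            exact hbound t ht
        _ = ENNReal.ofReal (∫ t in Ioi 0, c0 * Real.exp (-(b/B) * t)) := by
            rw [← ofReal_integral_eq_lintegral_ofReal hint
              (ae_of_all _ fun t => by positivity)]
        _ = ENNReal.ofReal (c0 * (b/B)⁻¹) := by
            rw [integral_const_mul, exp_int_aux hrpos]
        _ = ENNReal.ofReal (2*A/b * Real.exp (-(b*lam)) * I) := by
            congr 1
            rw [hc0def]
            field_simp
        _ = ENNReal.ofReal (2*A/b * Real.exp (-(b*lam))) * ENNReal.ofReal I := by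
            rw [ENNReal.ofReal_mul (by positivity)]
        _ = ENNReal.ofReal (2*A/b * Real.exp (-(b*lam))) *
              ∫⁻ x in K, ENNReal.ofReal (f x) := by
            rw [hI, ofReal_integral_eq_lintegral_ofReal hfiK (ae_of_all _ hf0)]
    -- assemble
    have hsum : (∫⁻ x, ENNReal.ofReal (max (f x - lam * (M + B)) 0)) =
        ∑' z, ∫⁻ x in S z, ENNReal.ofReal (max (f x - lam * (M + B)) 0) := by
      rw [← lintegral_iUnion hSmeas hdisj, hcover, Measure.restrict_univ]
    have hsum2 : (∑' z : Fin d → ℤ, ∫⁻ x in Metric.closedBall (fun i => (z i : ℝ)) 2⁻¹,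
        ENNReal.ofReal (f x)) = ENNReal.ofReal M := by
      have hcong : ∀ z : Fin d → ℤ, (∫⁻ x in Metric.closedBall (fun i => (z i : ℝ)) 2⁻¹,
          ENNReal.ofReal (f x)) = ∫⁻ x in S z, ENNReal.ofReal (f x) :=
        fun z => (setLIntegral_congr (hae z)).symm
      rw [tsum_congr hcong, ← lintegral_iUnion hSmeas hdisj, hcover, Measure.restrict_univ,
        ← ofReal_integral_eq_lintegral_ofReal hfi (ae_of_all _ hf0)]
    have hfinal : (∫⁻ x, ENNReal.ofReal (max (f x - lam * (M + B)) 0)) ≤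
        ENNReal.ofReal (2*A/b * Real.exp (-(b*lam))) * ENNReal.ofReal M := by
      rw [hsum]
      calc (∑' z, ∫⁻ x in S z, ENNReal.ofReal (max (f x - lam * (M + B)) 0))
          ≤ ∑' z : Fin d → ℤ, ENNReal.ofReal (2*A/b * Real.exp (-(b*lam))) *
              ∫⁻ x in Metric.closedBall (fun i => (z i : ℝ)) 2⁻¹, ENNReal.ofReal (f x) :=
            ENNReal.tsum_le_tsum key
        _ = ENNReal.ofReal (2*A/b * Real.exp (-(b*lam))) *
            ∑' z : Fin d → ℤ, ∫⁻ x in Metric.closedBall (fun i => (z i : ℝ)) 2⁻¹,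
              ENNReal.ofReal (f x) := ENNReal.tsum_mul_left
        _ = _ := by rw [hsum2]
    have hg_eq : (∫ x, max (f x - lam * (M + B)) 0) =
        (∫⁻ x, ENNReal.ofReal (max (f x - lam * (M + B)) 0)).toReal :=
      integral_eq_lintegral_of_nonneg_ae (ae_of_all _ hg_nonneg) hg_meas.aestronglyMeasurable
    rw [hg_eq]
    have hne : ENNReal.ofReal (2*A/b * Real.exp (-(b*lam))) * ENNReal.ofReal M ≠ ⊤ :=
      ENNReal.mul_ne_top ENNReal.ofReal_ne_top ENNReal.ofReal_ne_top
    calc (∫⁻ x, ENNReal.ofReal (max (f x - lam * (M + B)) 0)).toReal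
        ≤ (ENNReal.ofReal (2*A/b * Real.exp (-(b*lam))) * ENNReal.ofReal M).toReal :=
          ENNReal.toReal_mono hne hfinal
      _ = 2*A/b * Real.exp (-(b*lam)) * M := by
          rw [← ENNReal.ofReal_mul (by positivity), ENNReal.toReal_ofReal (by positivity)]
      _ ≤ (2*A/b + Real.exp b) * Real.exp (-(b*lam)) * M := by
          apply mul_le_mul_of_nonneg_right _ hM0
          apply mul_le_mul_of_nonneg_right _ (Real.exp_nonneg _)
          linarith [Real.exp_pos b]
end

section
/- Let f : ℝ^d → ℝ be nonnegative and measurable on a cube K, let M > 0, and suppose ℒ^d({x ∈ K : f(x) − (f)_K > r}) ≤ (A/M) exp(−br/M) ∫_K |f − (f)_K| dx for all r > aM, where (f)_K ≤ λM for some λ > a. Then ∫_K (f(x) − 2λM)₊ dx ≤ (2A/b)(bλ + 1) exp(−bλ) ∫_K |f − (f)_K| dx. -/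
open MeasureTheory Real Set

/-- Layer-cake estimate: if `f ≥ 0` is measurable on a cube `K`, `M > 0`, the John–Nirenberg
type bound `ℒᵈ({x ∈ K : f(x) − (f)_K > r}) ≤ (A/M) exp(−br/M) ∫_K |f − (f)_K|` holds for all
`r > aM`, and the average `(f)_K ≤ λM` with `λ > a`, then
`∫_K (f − 2λM)₊ ≤ (2A/b)(bλ + 1) exp(−bλ) ∫_K |f − (f)_K|`. -/
theorem stmt2 (d : ℕ) (A a b M lam : ℝ)
    (hA : 0 < A) (ha : 0 < a) (hb : 0 < b) (hM : 0 < M) (hlam : a < lam)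
    (z : Fin d → ℝ) (ρ : ℝ) (hρ : 0 < ρ) (K : Set (Fin d → ℝ))
    (hK : K = Metric.closedBall z ρ)
    (f : (Fin d → ℝ) → ℝ) (hfmeas : Measurable f) (hf0 : ∀ x, 0 ≤ f x)
    (fK I : ℝ) (hfK : fK = ⨍ y in K, f y) (hI : I = ∫ y in K, |f y - fK|)
    (havg : fK ≤ lam * M)
    (hJN : ∀ r : ℝ, a * M < r →
      (volume {x ∈ K | r < f x - fK}).toReal ≤ (A / M) * Real.exp (-(b * r) / M) * I) :
    ∫ x in K, max (f x - 2 * lam * M) 0 ≤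
      (2 * A / b) * (b * lam + 1) * Real.exp (-(b * lam)) * I := by
  have hI0 : 0 ≤ I := hI ▸ integral_nonneg fun y => abs_nonneg _
  have hKmeas : MeasurableSet K := hK ▸ measurableSet_closedBall
  have hKfin : volume K < ⊤ := by
    rw [hK]; exact (isCompact_closedBall z ρ).measure_lt_top
  set g : (Fin d → ℝ) → ℝ := fun x => max (f x - 2 * lam * M) 0 with hg
  have hgmeas : Measurable g := (hfmeas.sub measurable_const).max measurable_const
  have hg0 : ∀ x, 0 ≤ g x := fun x => le_max_right _ _
  -- layer cake
  have hlayer : ∫⁻ x in K, ENNReal.ofReal (g x) =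
      ∫⁻ t in Ioi 0, (volume.restrict K) {x | t < g x} :=
    lintegral_eq_lintegral_meas_lt _ (Filter.Eventually.of_forall hg0) hgmeas.aemeasurable
  set C : ℝ := (A / M) * Real.exp (-(b * lam)) * I with hC
  have hC0 : 0 ≤ C := by positivity
  -- pointwise bound on measures
  have hptw : ∀ t ∈ Ioi (0:ℝ), (volume.restrict K) {x | t < g x} ≤
      ENNReal.ofReal (C * Real.exp (-(b / M) * t)) := by
    intro t ht
    have ht0 : (0:ℝ) < t := ht
    rw [show {x | t < g x} = g ⁻¹' Ioi t from rfl,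
      Measure.restrict_apply (hgmeas measurableSet_Ioi)]
    have hsub : {x | t < g x} ∩ K ⊆ {x ∈ K | t + lam * M < f x - fK} := by
      intro x hx
      obtain ⟨hx1, hx2⟩ := hx
      have h1 : t < f x - 2 * lam * M := by
        have hx1' : t < (f x - 2 * lam * M) ⊔ 0 := hx1
        rcases lt_sup_iff.mp hx1' with h | h
        · exact h
        · linarith
      exact ⟨hx2, by linarith⟩
    have hr : a * M < t + lam * M := by nlinarith
    have hTfin : volume {x ∈ K | t + lam * M < f x - fK} < ⊤ :=
      lt_of_le_of_lt (measure_mono (fun x hx => hx.1)) hKfin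
    calc volume ({x | t < g x} ∩ K) ≤ volume {x ∈ K | t + lam * M < f x - fK} :=
          measure_mono hsub
      _ = ENNReal.ofReal ((volume {x ∈ K | t + lam * M < f x - fK}).toReal) :=
          (ENNReal.ofReal_toReal hTfin.ne).symm
      _ ≤ ENNReal.ofReal ((A / M) * Real.exp (-(b * (t + lam * M)) / M) * I) :=
          ENNReal.ofReal_le_ofReal (hJN _ hr)
      _ = ENNReal.ofReal (C * Real.exp (-(b / M) * t)) := by
          congr 1
          have : -(b * (t + lam * M)) / M = -(b / M) * t + -(b * lam) := by
            field_simp; ring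
          rw [this, Real.exp_add, hC]; ring
  -- the bounding function is integrable with known integral
  have hintble : IntegrableOn (fun t => C * Real.exp (-(b / M) * t)) (Ioi 0) :=
    ((exp_neg_integrableOn_Ioi 0 (div_pos hb hM))).const_mul C
  have hexpint : ∫ t in Ioi (0:ℝ), Real.exp (-(b / M) * t) = M / b := by
    have h2 := integral_comp_mul_left_Ioi (fun x => Real.exp (-x)) 0 (div_pos hb hM)
    simp only [mul_zero, integral_exp_neg_Ioi, neg_zero, Real.exp_zero, smul_eq_mul,
      mul_one] at h2
    simp_rw [neg_mul]
    rw [h2, inv_div]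
  have hbound : ∫⁻ x in K, ENNReal.ofReal (g x) ≤ ENNReal.ofReal (C * (M / b)) := by
    rw [hlayer]
    calc ∫⁻ t in Ioi 0, (volume.restrict K) {x | t < g x}
        ≤ ∫⁻ t in Ioi 0, ENNReal.ofReal (C * Real.exp (-(b / M) * t)) :=
          setLIntegral_mono_ae (by fun_prop) (Filter.Eventually.of_forall hptw)
      _ = ENNReal.ofReal (∫ t in Ioi 0, C * Real.exp (-(b / M) * t)) :=
          (ofReal_integral_eq_lintegral_ofReal hintble
            (Filter.Eventually.of_forall fun t => by positivity)).symm
      _ = ENNReal.ofReal (C * (M / b)) := by rw [integral_const_mul, hexpint]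
  -- convert LHS
  have hLHS : ∫ x in K, g x = (∫⁻ x in K, ENNReal.ofReal (g x)).toReal :=
    integral_eq_lintegral_of_nonneg_ae (Filter.Eventually.of_forall hg0)
      hgmeas.aestronglyMeasurable
  have hfin : ∫ x in K, g x ≤ C * (M / b) := by
    rw [hLHS]
    calc (∫⁻ x in K, ENNReal.ofReal (g x)).toReal
        ≤ (ENNReal.ofReal (C * (M / b))).toReal :=
          ENNReal.toReal_mono ENNReal.ofReal_ne_top hbound
      _ = C * (M / b) := ENNReal.toReal_ofReal (by positivity)
  calc ∫ x in K, g x ≤ C * (M / b) := hfin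
    _ = (A / b) * Real.exp (-(b * lam)) * I := by
        rw [hC]; field_simp; try ring
    _ ≤ (2 * A / b) * (b * lam + 1) * Real.exp (-(b * lam)) * I := by
        have hlam0 : (0:ℝ) < lam := ha.trans hlam
        have key : A / b ≤ (2 * A / b) * (b * lam + 1) := by
          have h3 : (0:ℝ) ≤ (A / b) * (2 * (b * lam) + 1) := by positivity
          have heq : (2 * A / b) * (b * lam + 1)
              = A / b + (A / b) * (2 * (b * lam) + 1) := by ring
          linarith
        nlinarith [mul_le_mul_of_nonneg_right key
          (mul_nonneg (Real.exp_pos (-(b * lam))).le hI0), Real.exp_pos (-(b * lam))]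
end
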